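/- Let P be a nonnegative |A| × |D| matrix whose every row sums to exactly 1 and every column sums to at most 1. Then P can be written as a finite convex combination P = ∑_i δ_i M_i with δ_i > 0, ∑_i δ_i = 1, where each M_i is a 0-1 matrix with exactly one 1 in each row and at most one 1 in each column, and M_i has support contained in the support of P. -/

import Mathlib

open Finset Matrix

/-- Rectangular Birkhoff–von Neumann theorem: a nonnegative matrix whose rows each
sum to 1 and whose columns each sum to at most 1 is a finite convex combination of
0-1 matrices with exactly one 1 per row and at most one 1 per column, each supported
inside the support of `P`. -/
theorem stmt8 {a d : ℕ} (P : Matrix (Fin a) (Fin d) ℝ)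
    (hpos : ∀ i j, 0 ≤ P i j)
    (hrow : ∀ i, ∑ j, P i j = 1)
    (hcol : ∀ j, ∑ i, P i j ≤ 1) :
    ∃ (k : ℕ) (δ : Fin k → ℝ) (M : Fin k → Matrix (Fin a) (Fin d) ℝ),
      (∀ i, 0 < δ i) ∧ (∑ i, δ i = 1) ∧ P = ∑ i, δ i • M i ∧
      (∀ i r c, M i r c = 0 ∨ M i r c = 1) ∧
      (∀ i r, ∑ c, M i r c = 1) ∧
      (∀ i c, ∑ r, M i r c ≤ 1) ∧
      (∀ i r c, M i r c ≠ 0 → P r c ≠ 0) := by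
  classical
  have htot : ∑ j : Fin d, ∑ i : Fin a, P i j = (a : ℝ) := by
    rw [Finset.sum_comm]; simp [hrow]
  have had : a ≤ d := by
    have h2 : (a : ℝ) ≤ (d : ℝ) := by
      rw [← htot]
      calc ∑ j : Fin d, ∑ i : Fin a, P i j ≤ ∑ _j : Fin d, (1:ℝ) :=
            Finset.sum_le_sum fun j _ => hcol j
        _ = d := by simp
    exact_mod_cast h2
  have hdef : ∑ j : Fin d, (1 - ∑ i, P i j) = (d : ℝ) - a := by
    rw [Finset.sum_sub_distrib, htot]; simp
  -- the augmented matrix over the sum type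
  let q : Fin d → ℝ := fun j => (1 - ∑ i, P i j) / ((d : ℝ) - a)
  let C : Matrix (Fin a ⊕ Fin (d - a)) (Fin d) ℝ :=
    fun s j => Sum.elim (fun r => P r j) (fun _ => q j) s
  have hqnn : ∀ j, 0 ≤ q j := fun j => by
    apply div_nonneg (by linarith [hcol j])
    have : (a:ℝ) ≤ d := by exact_mod_cast had
    linarith
  have hrowC : ∀ s, ∑ j, C s j = 1 := by
    rintro (r | r)
    · exact hrow r
    · have hlt : a < d := by have := r.2; omega
      have hpos' : (0:ℝ) < (d : ℝ) - a := by
        have : (a:ℝ) < d := by exact_mod_cast hlt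
        linarith
      show ∑ j, q j = 1
      rw [← Finset.sum_div, hdef, div_self (ne_of_gt hpos')]
  have hcolC : ∀ j, ∑ s : Fin a ⊕ Fin (d - a), C s j = 1 := by
    intro j
    rw [Fintype.sum_sum_type]
    show (∑ i, P i j) + ∑ _r : Fin (d - a), q j = 1
    rw [Finset.sum_const, Finset.card_univ, Fintype.card_fin, nsmul_eq_mul]
    rcases Nat.eq_or_lt_of_le had with h | h
    · have h0 : d - a = 0 := by omega
      have hda : (d : ℝ) - a = 0 := by
        have : (a:ℝ) = d := by exact_mod_cast h
        linarith
      have hall : ∀ j' ∈ Finset.univ, (0:ℝ) ≤ 1 - ∑ i, P i j' :=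
        fun j' _ => by linarith [hcol j']
      have hz : ∀ j' ∈ Finset.univ, (1 - ∑ i, P i j') = 0 := by
        rw [← Finset.sum_eq_zero_iff_of_nonneg hall]
        rw [hdef, hda]
      have := hz j (Finset.mem_univ j)
      rw [h0]
      push_cast
      linarith
    · have hpos' : (0:ℝ) < (d : ℝ) - a := by
        have : (a:ℝ) < d := by exact_mod_cast h
        linarith
      have hcast : ((d - a : ℕ) : ℝ) = (d : ℝ) - a := by
        push_cast [Nat.cast_sub had]; ring
      rw [hcast]
      show (∑ i, P i j) + ((d:ℝ) - a) * ((1 - ∑ i, P i j) / ((d : ℝ) - a)) = 1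
      field_simp
      ring
  let e : Fin a ⊕ Fin (d - a) ≃ Fin d :=
    finSumFinEquiv.trans (finCongr (Nat.add_sub_cancel' had))
  let B : Matrix (Fin d) (Fin d) ℝ := fun i j => C (e.symm i) j
  have hBe : ∀ s j, B (e s) j = C s j := by
    intro s j
    show C (e.symm (e s)) j = C s j
    rw [Equiv.symm_apply_apply]
  have hBds : B ∈ doublyStochastic ℝ (Fin d) := by
    rw [mem_doublyStochastic_iff_sum]
    refine ⟨?_, ?_, ?_⟩
    · intro i j
      show 0 ≤ C (e.symm i) j
      rcases e.symm i with r | r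
      · exact hpos r j
      · exact hqnn j
    · intro i
      obtain ⟨s, rfl⟩ := e.surjective i
      calc ∑ j, B (e s) j = ∑ j, C s j := Finset.sum_congr rfl fun j _ => hBe s j
        _ = 1 := hrowC s
    · intro j
      calc ∑ i : Fin d, B i j = ∑ s : Fin a ⊕ Fin (d - a), B (e s) j :=
            (Fintype.sum_equiv e _ _ fun s => rfl).symm
        _ = ∑ s, C s j := Finset.sum_congr rfl fun s _ => hBe s j
        _ = 1 := hcolC j
  obtain ⟨w, hw0, hw1, hwB⟩ := exists_eq_sum_perm_of_mem_doublyStochastic hBds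
  have hperm : ∀ (σ : Equiv.Perm (Fin d)) i j,
      (σ.permMatrix ℝ) i j = if σ i = j then 1 else 0 := by
    intro σ i j
    simp [Equiv.Perm.permMatrix, PEquiv.toMatrix_apply, Equiv.toPEquiv_apply]
  have hwB' : ∀ i j, ∑ σ : Equiv.Perm (Fin d),
      w σ * (if σ i = j then (1:ℝ) else 0) = B i j := by
    intro i j
    rw [← hwB, Matrix.sum_apply]
    refine Finset.sum_congr rfl fun σ _ => ?_
    rw [Matrix.smul_apply, smul_eq_mul, hperm]
  have hPB : ∀ r c, P r c = B (e (Sum.inl r)) c := fun r c => (hBe (Sum.inl r) c).symm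
  -- keep only the nonzero weights
  set S : Finset (Equiv.Perm (Fin d)) := Finset.univ.filter (fun σ => w σ ≠ 0) with hS
  let e2 : Fin S.card ≃ {x // x ∈ S} := S.equivFin.symm
  have hSsum : ∀ f : Equiv.Perm (Fin d) → ℝ, (∀ σ, w σ = 0 → f σ = 0) →
      ∑ i : Fin S.card, f (e2 i) = ∑ σ, f σ := by
    intro f hf
    calc ∑ i : Fin S.card, f (e2 i)
        = ∑ x ∈ S.attach, f x.1 := by
          rw [Fintype.sum_equiv e2 _ (fun x => f x.1) (fun i => rfl),
            Finset.univ_eq_attach]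
      _ = ∑ σ ∈ S, f σ := Finset.sum_attach S f
      _ = ∑ σ, f σ := by
          apply Finset.sum_subset (Finset.subset_univ S)
          intro σ _ hσ
          rw [hS, Finset.mem_filter] at hσ
          push_neg at hσ
          exact hf σ (hσ (Finset.mem_univ σ))
  refine ⟨S.card, fun i => w (e2 i), fun i r c =>
    if ((e2 i : Equiv.Perm (Fin d))) (e (Sum.inl r)) = c then 1 else 0,
    ?_, ?_, ?_, ?_, ?_, ?_, ?_⟩
  · intro i
    have hmem := Finset.mem_filter.mp ((e2 i).2)
    exact lt_of_le_of_ne (hw0 _) (Ne.symm hmem.2)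
  · rw [hSsum w (fun σ h => h), hw1]
  · ext r c
    rw [Matrix.sum_apply]
    simp only [Matrix.smul_apply, Pi.smul_apply, smul_eq_mul]
    show P r c = ∑ i : Fin S.card, w (e2 i) * (if ((e2 i : Equiv.Perm (Fin d))) (e (Sum.inl r)) = c then (1:ℝ) else 0)
    rw [hSsum (fun σ => w σ * (if σ (e (Sum.inl r)) = c then 1 else 0))
      (fun σ h => by simp [h])]
    rw [hwB', hPB]
  · intro i r c
    dsimp only
    split <;> simp
  · intro i r
    simp
  · intro i c
    dsimp only
    have hinj : Function.Injective
        (fun r : Fin a => ((e2 i : Equiv.Perm (Fin d))) (e (Sum.inl r))) :=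
      fun x y h => Sum.inl_injective (e.injective ((e2 i : Equiv.Perm (Fin d)).injective h))
    calc ∑ r : Fin a, (if ((e2 i : Equiv.Perm (Fin d))) (e (Sum.inl r)) = c then (1:ℝ) else 0)
        = ∑ x ∈ Finset.univ.image
            (fun r : Fin a => ((e2 i : Equiv.Perm (Fin d))) (e (Sum.inl r))),
            (if x = c then (1:ℝ) else 0) := by
          rw [Finset.sum_image (fun x _ y _ h => hinj h)]
      _ ≤ ∑ x : Fin d, (if x = c then (1:ℝ) else 0) := by
          apply Finset.sum_le_sum_of_subset_of_nonneg (Finset.subset_univ _)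
          intro x _ _
          split <;> norm_num
      _ = 1 := by simp
  · intro i r c hM hP
    dsimp only at hM
    have hσc : ((e2 i : Equiv.Perm (Fin d))) (e (Sum.inl r)) = c := by
      by_contra h
      exact hM (if_neg h)
    have hwpos : 0 < w (e2 i) := by
      have hmem := Finset.mem_filter.mp ((e2 i).2)
      exact lt_of_le_of_ne (hw0 _) (Ne.symm hmem.2)
    have hterm : w (e2 i) * (if ((e2 i : Equiv.Perm (Fin d))) (e (Sum.inl r)) = c
          then (1:ℝ) else 0)
        ≤ ∑ σ : Equiv.Perm (Fin d), w σ * (if σ (e (Sum.inl r)) = c then (1:ℝ) else 0) := by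
      apply Finset.single_le_sum
        (f := fun σ => w σ * (if σ (e (Sum.inl r)) = c then (1:ℝ) else 0))
        (fun τ _ => ?_) (Finset.mem_univ _)
      apply mul_nonneg (hw0 τ)
      split <;> norm_num
    rw [hσc, if_pos rfl, mul_one, hwB', ← hPB, hP] at hterm
    linarith
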